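/- Let h: Ω → Ω be a measurable bijection inducing a bounded composition operator C_h on L²(Ω), with non-singular inverse h⁻¹ and g_{h⁻¹} ∈ L^∞. Define W_h f := (f ∘ h) · g_{h⁻¹}^{1/2}. If g_h ≥ r almost everywhere for some r > 0, then W_h is a unitary operator on L²(Ω) with inverse (and adjoint) given by W̃ f := (f · g_{h⁻¹}^{-1/2}) ∘ h⁻¹. -/

import Mathlib

open MeasureTheory ENNReal

/-- Lebesgue measure on a subset `Ω` of `ℝ^d`, viewed as a measure on the subtype. -/
noncomputable def lebOn {d : ℕ} (Ω : Set (EuclideanSpace ℝ (Fin d))) : Measure Ω :=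
  (volume : Measure (EuclideanSpace ℝ (Fin d))).comap Subtype.val

lemma key_density {α : Type*} [MeasurableSpace α] (μ : Measure α) [SigmaFinite μ]
    {h ζ : α → α} (hm : Measurable h) (hmζ : Measurable ζ)
    (hζh : ∀ x, ζ (h x) = x) (hhζ : ∀ x, h (ζ x) = x)
    [Measure.HaveLebesgueDecomposition (μ.map h) μ]
    [Measure.HaveLebesgueDecomposition (μ.map ζ) μ]
    (hac : μ.map h ≪ μ) (hacζ : μ.map ζ ≪ μ) :
    ∀ᵐ y ∂μ, ((μ.map h).rnDeriv μ y) * ((μ.map ζ).rnDeriv μ (ζ y)) = 1 := by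
  set gh := (μ.map h).rnDeriv μ with hgh
  set gζ := (μ.map ζ).rnDeriv μ with hgζ
  have mgh : Measurable gh := Measure.measurable_rnDeriv _ _
  have mgζ : Measurable gζ := Measure.measurable_rnDeriv _ _
  have hmaph : μ.map h = μ.withDensity gh := (Measure.withDensity_rnDeriv_eq _ _ hac).symm
  have hmapζ : μ.map ζ = μ.withDensity gζ := (Measure.withDensity_rnDeriv_eq _ _ hacζ).symm
  have h1 : (μ.map ζ).map h = μ := by
    rw [Measure.map_map hm hmζ]
    have : h ∘ ζ = id := funext hhζ
    rw [this, Measure.map_id]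
  have h2 : (μ.withDensity gζ).map h = (μ.map h).withDensity (fun y => gζ (ζ y)) := by
    ext s hs
    rw [Measure.map_apply hm hs, withDensity_apply _ (hm hs),
      withDensity_apply _ hs, setLIntegral_map (f := fun a => gζ (ζ a)) hs (mgζ.comp hmζ) hm]
    refine setLIntegral_congr_fun (hm hs) (fun x _ => ?_)
    simp [hζh x]
  have h3 : μ.withDensity (gh * fun y => gζ (ζ y)) = μ := by
    rw [withDensity_mul μ (f := gh) (g := fun y => gζ (ζ y)) mgh (mgζ.comp hmζ), ← hmaph, ← h2, ← hmapζ, h1]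
  have h4 : (μ.withDensity (gh * fun y => gζ (ζ y))).rnDeriv μ =ᵐ[μ]
      (gh * fun y => gζ (ζ y)) :=
    Measure.rnDeriv_withDensity μ (mgh.mul (mgζ.comp hmζ))
  have h5 := Measure.rnDeriv_self μ
  rw [h3] at h4
  filter_upwards [h4, h5] with y hy1 hy2
  have : gh y * gζ (ζ y) = μ.rnDeriv μ y := hy1.symm
  rw [this, hy2]

theorem weighted_composition_unitary
    {d : ℕ} (Ω : Set (EuclideanSpace ℝ (Fin d))) (hΩ : IsOpen Ω)
    (h ζ : Ω → Ω) (hm : Measurable h) (hmζ : Measurable ζ)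
    (hζh : ∀ x, ζ (h x) = x) (hhζ : ∀ x, h (ζ x) = x)
    (hac : (lebOn Ω).map h ≪ lebOn Ω)
    (hacζ : (lebOn Ω).map ζ ≪ lebOn Ω)
    (hbd : essSup (((lebOn Ω).map h).rnDeriv (lebOn Ω)) (lebOn Ω) ≠ ⊤)
    (hbdζ : essSup (((lebOn Ω).map ζ).rnDeriv (lebOn Ω)) (lebOn Ω) ≠ ⊤)
    (W Wt : Lp ℝ 2 (lebOn Ω) →L[ℝ] Lp ℝ 2 (lebOn Ω))
    (hW : ∀ f : Lp ℝ 2 (lebOn Ω), (W f : Ω → ℝ) =ᵐ[lebOn Ω]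
      fun x => f (h x) * Real.sqrt ((((lebOn Ω).map ζ).rnDeriv (lebOn Ω) x).toReal))
    (hWt : ∀ f : Lp ℝ 2 (lebOn Ω), (Wt f : Ω → ℝ) =ᵐ[lebOn Ω]
      fun x => f (ζ x) * (Real.sqrt ((((lebOn Ω).map ζ).rnDeriv (lebOn Ω) (ζ x)).toReal))⁻¹)
    (r : ℝ≥0∞) (hr : 0 < r)
    (hge : ∀ᵐ x ∂(lebOn Ω), r ≤ ((lebOn Ω).map h).rnDeriv (lebOn Ω) x) :
    (∀ f, Wt (W f) = f) ∧ (∀ f, W (Wt f) = f) ∧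
      (∀ f p : Lp ℝ 2 (lebOn Ω), (inner ℝ (W f) (W p) : ℝ) = inner ℝ f p) ∧
      (∀ f p : Lp ℝ 2 (lebOn Ω), (inner ℝ (W f) p : ℝ) = inner ℝ f (Wt p)) := by
  haveI sfμ : SigmaFinite (lebOn Ω) := by
    constructor
    exact ⟨⟨fun n => Subtype.val ⁻¹' spanningSets (volume : Measure (EuclideanSpace ℝ (Fin d))) n,
      fun _ => Set.mem_univ _,
      fun n => by
        rw [lebOn, comap_subtype_coe_apply hΩ.measurableSet]
        exact lt_of_le_of_lt (measure_mono (Set.image_preimage_subset _ _))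
          (measure_spanningSets_lt_top _ n),
      by rw [← Set.preimage_iUnion, iUnion_spanningSets, Set.preimage_univ]⟩⟩
  haveI sf1 : SigmaFinite ((lebOn Ω).map h) := by
    have h2 := MeasurableEquiv.sigmaFinite_map (μ := lebOn Ω)
      (⟨⟨h, ζ, hζh, hhζ⟩, hm, hmζ⟩ : Ω ≃ᵐ Ω)
    simpa using h2
  haveI sf2 : SigmaFinite ((lebOn Ω).map ζ) := by
    have h2 := MeasurableEquiv.sigmaFinite_map (μ := lebOn Ω)
      (⟨⟨ζ, h, hhζ, hζh⟩, hmζ, hm⟩ : Ω ≃ᵐ Ω)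
    simpa using h2
  set gh := ((lebOn Ω).map h).rnDeriv (lebOn Ω) with hghdef
  set gζ := ((lebOn Ω).map ζ).rnDeriv (lebOn Ω) with hgζdef
  have mgh : Measurable gh := Measure.measurable_rnDeriv _ _
  have mgζ : Measurable gζ := Measure.measurable_rnDeriv _ _
  have qh : Measure.QuasiMeasurePreserving h (lebOn Ω) (lebOn Ω) := ⟨hm, hac⟩
  have qζ : Measure.QuasiMeasurePreserving ζ (lebOn Ω) (lebOn Ω) := ⟨hmζ, hacζ⟩
  have keyh : ∀ᵐ y ∂(lebOn Ω), gh y * gζ (ζ y) = 1 := key_density (lebOn Ω) hm hmζ hζh hhζ hac hacζ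
  have keyζ : ∀ᵐ x ∂(lebOn Ω), gζ x * gh (h x) = 1 := key_density (lebOn Ω) hmζ hm hhζ hζh hacζ hac
  have hle : ∀ᵐ y ∂(lebOn Ω), gh y ≤ essSup gh (lebOn Ω) := ae_le_essSup gh
  have ghfacts : ∀ᵐ y ∂(lebOn Ω), gh y ≠ 0 ∧ gh y ≠ ⊤ := by
    filter_upwards [hle, hge] with y h1 h2
    exact ⟨fun h0 => absurd (le_trans h2 h0.le) (not_le.mpr hr),
      fun ht => hbd (top_le_iff.mp (ht ▸ h1))⟩
  have pos1 : ∀ᵐ y ∂(lebOn Ω), 0 < (gζ (ζ y)).toReal := by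
    filter_upwards [keyh, ghfacts] with y hk hgf
    have hne0 : gζ (ζ y) ≠ 0 := by
      intro hz; rw [hz, mul_zero] at hk; exact one_ne_zero hk.symm
    have hnetop : gζ (ζ y) ≠ ⊤ := by
      intro hz; rw [hz, ENNReal.mul_top hgf.1] at hk
      exact (by simp : (⊤ : ℝ≥0∞) ≠ 1) hk
    exact ENNReal.toReal_pos hne0 hnetop
  have ghh : ∀ᵐ x ∂(lebOn Ω), gh (h x) ≠ 0 ∧ gh (h x) ≠ ⊤ := qh.tendsto_ae.eventually ghfacts
  have pos2 : ∀ᵐ x ∂(lebOn Ω), 0 < (gζ x).toReal := by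
    filter_upwards [keyζ, ghh] with x hk hgf
    have hne0 : gζ x ≠ 0 := by
      intro hz; rw [hz, zero_mul] at hk; exact one_ne_zero hk.symm
    have hnetop : gζ x ≠ ⊤ := by
      intro hz; rw [hz, ENNReal.top_mul hgf.1] at hk
      exact (by simp : (⊤ : ℝ≥0∞) ≠ 1) hk
    exact ENNReal.toReal_pos hne0 hnetop
  -- Part 1
  have part1 : ∀ f : Lp ℝ 2 (lebOn Ω), Wt (W f) = f := by
    intro f
    refine Lp.ext ?_
    have e3 := qζ.ae_eq (hW f)
    filter_upwards [hWt (W f), e3, pos1] with x hx2 hx3 hp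
    simp only [Function.comp_apply] at hx3
    rw [hx2, hx3, hhζ x, mul_assoc,
      mul_inv_cancel₀ (Real.sqrt_ne_zero'.mpr hp), mul_one]
  -- Part 2
  have part2 : ∀ f : Lp ℝ 2 (lebOn Ω), W (Wt f) = f := by
    intro f
    refine Lp.ext ?_
    have e3 := qh.ae_eq (hWt f)
    filter_upwards [hW (Wt f), e3, pos2] with x hx2 hx3 hp
    simp only [Function.comp_apply] at hx3
    rw [hx2, hx3, hζh x, mul_assoc,
      inv_mul_cancel₀ (Real.sqrt_ne_zero'.mpr hp), mul_one]
  -- Part 3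
  have part3 : ∀ f p : Lp ℝ 2 (lebOn Ω), (inner ℝ (W f) (W p) : ℝ) = inner ℝ f p := by
    intro f p
    have hΦm : AEStronglyMeasurable
        (fun y => (f y * p y) * (gζ (ζ y)).toReal) (lebOn Ω) :=
      ((Lp.aestronglyMeasurable f).mul (Lp.aestronglyMeasurable p)).mul
        ((ENNReal.measurable_toReal.comp (mgζ.comp hmζ)).aestronglyMeasurable)
    calc (inner ℝ (W f) (W p) : ℝ) = ∫ x, (W f : Ω → ℝ) x * (W p : Ω → ℝ) x ∂(lebOn Ω) := by
          rw [L2.inner_def]; simp [RCLike.inner_apply]; exact integral_congr_ae (Filter.Eventually.of_forall fun _ => mul_comm _ _)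
      _ = ∫ x, (fun y => (f y * p y) * (gζ (ζ y)).toReal) (h x) ∂(lebOn Ω) := by
          refine integral_congr_ae ?_
          filter_upwards [hW f, hW p] with x h1 h2
          show ((W f : Ω → ℝ) x) * ((W p : Ω → ℝ) x)
            = ((f : Ω → ℝ) (h x) * (p : Ω → ℝ) (h x)) * ((gζ (ζ (h x))).toReal)
          rw [h1, h2, hζh x]
          have hs : Real.sqrt ((gζ x).toReal) * Real.sqrt ((gζ x).toReal)
              = (gζ x).toReal := Real.mul_self_sqrt ENNReal.toReal_nonneg
          calc (f (h x) * Real.sqrt ((gζ x).toReal)) * (p (h x) * Real.sqrt ((gζ x).toReal))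
              = (f (h x) * p (h x)) * (Real.sqrt ((gζ x).toReal) * Real.sqrt ((gζ x).toReal)) := by
                ring
            _ = (f (h x) * p (h x)) * (gζ x).toReal := by rw [hs]
      _ = ∫ y, (f y * p y) * (gζ (ζ y)).toReal ∂((lebOn Ω).map h) :=
          (integral_map hm.aemeasurable (hΦm.mono_ac hac)).symm
      _ = ∫ y, (gh y).toReal • ((f y * p y) * (gζ (ζ y)).toReal) ∂(lebOn Ω) :=
          (integral_rnDeriv_smul hac).symm
      _ = ∫ y, f y * p y ∂(lebOn Ω) := by
          refine integral_congr_ae ?_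
          filter_upwards [keyh] with y hk
          simp only [smul_eq_mul]
          calc (gh y).toReal * ((f y * p y) * (gζ (ζ y)).toReal)
              = (f y * p y) * ((gh y) * (gζ (ζ y))).toReal := by
                rw [ENNReal.toReal_mul]; ring
            _ = f y * p y := by rw [hk]; simp
      _ = inner ℝ f p := by rw [L2.inner_def]; simp [RCLike.inner_apply]; exact integral_congr_ae (Filter.Eventually.of_forall fun _ => mul_comm _ _)
  refine ⟨part1, part2, part3, fun f p => ?_⟩
  calc (inner ℝ (W f) p : ℝ) = inner ℝ (W f) (W (Wt p)) := by rw [part2 p]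
    _ = inner ℝ f (Wt p) := part3 f (Wt p)
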